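/- Let R be a ring and r ∈ R a non-zerodivisor. If s ∈ R is a non-zerodivisor modulo r (i.e. s is a non-zerodivisor on R/rR), then the natural ring map R[X]/(rX − s) → R[s/r] ⊆ R[1/r] is an isomorphism. -/

import Mathlib

open Polynomial

/-- **`R[X]/(rX − s) ≅ R[s/r]`.**
Let `r ∈ R` be a non-zerodivisor and `s ∈ R` a non-zerodivisor modulo `r`.  Let
`t = s/r ∈ R[1/r]` and consider the `R`-algebra map `R[X] → R[1/r]`, `X ↦ t`.  Its kernel
is exactly the ideal `(rX − s)` and its range is the subalgebra `R[s/r]` generated by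
`t`; that is, the natural map `R[X]/(rX − s) → R[s/r]` is an isomorphism. -/
theorem statement12 {R : Type} [CommRing R] (r s : R)
    (hr : ∀ a : R, r * a = 0 → a = 0)
    (hs : ∀ a : R, s * a ∈ Ideal.span {r} → a ∈ Ideal.span {r}) :
    RingHom.ker ((Polynomial.aeval
        (algebraMap R (Localization.Away r) s * IsLocalization.Away.invSelf r) :
          R[X] →ₐ[R] Localization.Away r)) =
      Ideal.span {Polynomial.C r * Polynomial.X - Polynomial.C s} ∧
    (Polynomial.aeval
        (algebraMap R (Localization.Away r) s * IsLocalization.Away.invSelf r) :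
          R[X] →ₐ[R] Localization.Away r).range =
      Algebra.adjoin R
        {algebraMap R (Localization.Away r) s * IsLocalization.Away.invSelf r} := by
  set S := Localization.Away r with hS
  set t : S := algebraMap R S s * IsLocalization.Away.invSelf r with ht
  have hrnzd : r ∈ nonZeroDivisors R := mem_nonZeroDivisors_iff_right.mpr fun a ha => hr a (by rwa [mul_comm])
  have hle : Submonoid.powers r ≤ nonZeroDivisors R := by
    rintro x ⟨n, rfl⟩; exact pow_mem hrnzd n
  have hinj : Function.Injective (algebraMap R S) := IsLocalization.injective S hle
  have hrt : algebraMap R S r * t = algebraMap R S s := by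
    rw [ht, ← mul_assoc, mul_comm (algebraMap R S r), mul_assoc,
      IsLocalization.Away.mul_invSelf, mul_one]
  have hgen : (aeval t : R[X] →ₐ[R] S) (C r * X - C s) = 0 := by
    simp [hrt]
  have hsn : ∀ (k : ℕ) (a : R), s ^ k * a ∈ Ideal.span {r} → a ∈ Ideal.span {r} := by
    intro k
    induction k with
    | zero => intro a ha; simpa using ha
    | succ k ih =>
      intro a ha
      refine ih a (hs _ ?_)
      rwa [pow_succ, mul_comm (s ^ k) s, mul_assoc] at ha
  have key : ∀ n (p : R[X]), p.natDegree ≤ n → aeval t p = 0 →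
      p ∈ Ideal.span {C r * X - C s} := by
    intro n
    induction n with
    | zero =>
      intro p hd hp
      rw [Polynomial.eq_C_of_natDegree_le_zero hd] at hp ⊢
      rw [aeval_C] at hp
      have : p.coeff 0 = 0 := hinj (by simpa using hp)
      rw [this]
      simp
    | succ n ih =>
      intro p hd hp
      by_cases h : p.natDegree ≤ n
      · exact ih p h hp
      have hN : p.natDegree = n + 1 := by omega
      have hsc : aeval (algebraMap R S s) (p.scaleRoots r) = 0 := by
        rw [← hrt]; exact Polynomial.scaleRoots_aeval_eq_zero hp
      rw [Polynomial.aeval_algebraMap_apply] at hsc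
      have heval : (p.scaleRoots r).eval s = 0 := hinj (by simpa using hsc)
      rw [Polynomial.eval_eq_sum_range, Polynomial.natDegree_scaleRoots, hN,
        Finset.sum_range_succ] at heval
      have hlead : p.coeff (n + 1) ∈ Ideal.span {r} := by
        refine hsn (n + 1) _ ?_
        have hmem : p.coeff (n + 1) * s ^ (n + 1) ∈ Ideal.span {r} := by
          have : p.coeff (n + 1) * s ^ (n + 1) =
              -(∑ i ∈ Finset.range (n + 1), (p.scaleRoots r).coeff i * s ^ i) := by
            have := heval
            rw [coeff_scaleRoots, hN] at this
            simp only [Nat.sub_self, pow_zero, mul_one] at this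
            linear_combination this
          rw [this]
          refine neg_mem (Ideal.sum_mem _ ?_)
          intro i hi
          rw [coeff_scaleRoots, hN]
          rw [Finset.mem_range] at hi
          refine Ideal.mem_span_singleton.mpr ?_
          exact Dvd.dvd.mul_right (Dvd.dvd.mul_left (dvd_pow_self r (by omega)) _) _
        rwa [mul_comm]
      obtain ⟨b, hb⟩ := Ideal.mem_span_singleton'.mp hlead
      set q := p - C b * X ^ n * (C r * X - C s) with hq
      have hqa : aeval t q = 0 := by
        rw [hq]; simp [hgen, hp]
      have hqd : q.natDegree ≤ n := by
        rw [Polynomial.natDegree_le_iff_coeff_eq_zero]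
        intro N hn
        have hexp : C b * X ^ n * (C r * X - C s) =
            C (b * r) * X ^ (n + 1) - C (b * s) * X ^ n := by
          rw [C_mul, C_mul]; ring
        rw [hq, Polynomial.coeff_sub, hexp, Polynomial.coeff_sub,
          Polynomial.coeff_C_mul, Polynomial.coeff_C_mul,
          Polynomial.coeff_X_pow, Polynomial.coeff_X_pow]
        rcases eq_or_ne N (n + 1) with rfl | hne
        · simp [← hb, mul_comm]
        · have h1 : p.coeff N = 0 :=
            Polynomial.coeff_eq_zero_of_natDegree_lt (by omega)
          have h2 : N ≠ n := by omega
          simp [h1, hne, h2]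
      have hqmem := ih q hqd hqa
      have : p = q + C b * X ^ n * (C r * X - C s) := by rw [hq]; ring
      rw [this]
      exact add_mem hqmem (Ideal.mul_mem_left _ _ (Ideal.subset_span rfl))
  constructor
  · refine le_antisymm (fun p hp => key p.natDegree p le_rfl hp) ?_
    rw [Ideal.span_le]
    rintro x rfl
    exact hgen
  · exact (Algebra.adjoin_singleton_eq_range_aeval R t).symm
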